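/- Let T be a finite tree with at least one edge, let S_T be the set of pendant (degree-one) vertices of T, and let k = min over v ∈ S_T of the eccentricity e(v). Then T is [k]-edge geodetic, i.e. every edge of T lies on some geodesic of length k, and some edge of T lies on no geodesic of length k+1. -/

import Mathlib

open SimpleGraph

/-- A walk is a `k`-geodesic if it has length `k` and is a shortest path
between its endpoints. -/
def IsKGeodesic {V : Type*} (G : SimpleGraph V) (k : ℕ) {u v : V} (w : G.Walk u v) : Prop :=
  w.length = k ∧ G.dist u v = k

/-- A graph is `k`-edge geodetic if every edge lies on some `k`-geodesic. -/
def IsEdgeGeodetic {V : Type*} (G : SimpleGraph V) (k : ℕ) : Prop :=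
  ∀ e ∈ G.edgeSet, ∃ (u v : V) (w : G.Walk u v), IsKGeodesic G k w ∧ e ∈ w.edges

/-- A graph is `[k]`-edge geodetic if it is `k`-edge geodetic but not `(k+1)`-edge geodetic. -/
def IsMaxEdgeGeodetic {V : Type*} (G : SimpleGraph V) (k : ℕ) : Prop :=
  IsEdgeGeodetic G k ∧ ¬ IsEdgeGeodetic G (k + 1)

/-- `genNum G k` is the minimum number of `k`-geodesics of `G` whose edges
together cover all edges of `G`. -/
noncomputable def genNum {V : Type*} (G : SimpleGraph V) (k : ℕ) : ℕ :=
  sInf {r : ℕ | ∃ f : Fin r → Σ u : V, Σ v : V, G.Walk u v,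
    (∀ i, IsKGeodesic G k (f i).2.2) ∧
    ∀ e ∈ G.edgeSet, ∃ i, e ∈ (f i).2.2.edges}

/-- Eccentricity of a vertex: the maximum distance from it to any vertex. -/
noncomputable def eccent {V : Type*} [Fintype V] (G : SimpleGraph V) (v : V) : ℕ :=
  Finset.univ.sup (G.dist v)


set_option linter.unusedSectionVars false
namespace TreeGeo

variable {V : Type*} [DecidableEq V] {G : SimpleGraph V}

lemma append_isPath {a b c : V} {p : G.Walk a b} {q : G.Walk b c}
    (hp : p.IsPath) (hq : q.IsPath)
    (h : ∀ x, x ∈ p.support → x ∈ q.support → x = b) : (p.append q).IsPath := by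
  rw [Walk.isPath_def, Walk.support_append]
  refine List.Nodup.append hp.support_nodup hq.support_nodup.tail ?_
  intro x hx hx'
  have hxq : x ∈ q.support := List.mem_of_mem_tail hx'
  have hxb : x = b := h x hx hxq
  subst hxb
  have hcons := hq.support_nodup
  rw [Walk.support_eq_cons q] at hcons
  exact (List.nodup_cons.mp hcons).1 hx'

lemma concat_isPath {a b c : V} {p : G.Walk a b} (h : G.Adj b c)
    (hp : p.IsPath) (hc : c ∉ p.support) : (p.concat h).IsPath := by
  rw [Walk.concat_eq_append]
  refine append_isPath hp ?_ ?_
  · simp [Walk.isPath_def, h.ne]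
  · intro x hx hx'
    simp only [Walk.support_cons, Walk.support_nil, List.mem_cons, List.mem_singleton,
      List.not_mem_nil, or_false] at hx'
    rcases hx' with rfl | rfl
    · rfl
    · exact absurd hx hc

variable (hT : G.IsTree)
include hT

lemma path_eq_dist {a b : V} (p : G.Walk a b) (hp : p.IsPath) : p.length = G.dist a b := by
  obtain ⟨w, hw⟩ := (hT.isConnected.1 a b).exists_walk_length_eq_dist
  have hbp : w.bypass.IsPath := Walk.bypass_isPath w
  have hlen : w.bypass.length = G.dist a b :=
    le_antisymm (hw ▸ Walk.length_bypass_le w) (dist_le _)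
  have := (hT.existsUnique_path a b).unique hp hbp
  rw [this, hlen]

lemma dist_split {a b x : V} (p : G.Walk a b) (hp : p.IsPath) (hx : x ∈ p.support) :
    G.dist a x + G.dist x b = G.dist a b := by
  have h1 : G.dist a x ≤ (p.takeUntil x hx).length := dist_le _
  have h2 : G.dist x b ≤ (p.dropUntil x hx).length := dist_le _
  have h3 : (p.takeUntil x hx).length + (p.dropUntil x hx).length = p.length := by
    have := congrArg Walk.length (p.take_spec hx)
    rwa [Walk.length_append] at this
  have h4 : G.dist a b ≤ G.dist a x + G.dist x b := hT.isConnected.dist_triangle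
  have h5 := path_eq_dist hT p hp
  omega


omit hT in
lemma getVert_mem_support (p : G.Walk a b) (n : ℕ) : p.getVert n ∈ p.support := by
  induction p generalizing n with
  | nil => cases n <;> simp [Walk.getVert]
  | cons h q ih =>
    cases n with
    | zero => simp
    | succ m => rw [Walk.getVert_cons_succ]; simp only [Walk.support_cons, List.mem_cons]
                exact Or.inr (ih m)

lemma adj_dist_ne {u v : V} (huv : G.Adj u v) (w : V) : G.dist w u ≠ G.dist w v := by
  intro h
  obtain ⟨p, hp, hpl⟩ := hT.isConnected.exists_path_of_dist w u
  obtain ⟨q, hq, hql⟩ := hT.isConnected.exists_path_of_dist w v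
  have hvp : v ∉ p.support := by
    intro hv
    have := dist_split hT p hp hv
    have h1 : G.dist v u = 1 := dist_eq_one_iff_adj.mpr huv.symm
    omega
  have hcp : (p.concat huv).IsPath := concat_isPath huv hp hvp
  have := (hT.existsUnique_path w v).unique hcp hq
  have hl := congrArg Walk.length this
  rw [Walk.length_concat] at hl
  omega

lemma adj_dist_cases {u v : V} (huv : G.Adj u v) (w : V) :
    G.dist v w = G.dist u w + 1 ∨ G.dist u w = G.dist v w + 1 := by
  have h1 : G.dist u w ≤ G.dist u v + G.dist v w := hT.isConnected.dist_triangle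
  have h2 : G.dist v w ≤ G.dist v u + G.dist u w := hT.isConnected.dist_triangle
  have h3 : G.dist u v = 1 := dist_eq_one_iff_adj.mpr huv
  have h4 : G.dist v u = 1 := dist_eq_one_iff_adj.mpr huv.symm
  have h5 : G.dist w u ≠ G.dist w v := adj_dist_ne hT huv w
  rw [SimpleGraph.dist_comm (u := w) (v := u), SimpleGraph.dist_comm (u := w) (v := v)] at h5
  omega

/-- every vertex of a path from `u` into the `u`-side is on the `u`-side -/
lemma support_side {u v x : V} (huv : G.Adj u v) (hx : G.dist v x = G.dist u x + 1)
    (p : G.Walk u x) (hp : p.IsPath) :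
    ∀ a ∈ p.support, G.dist v a = G.dist u a + 1 := by
  intro a ha
  have hsplit := dist_split hT p hp ha
  have htri : G.dist v x ≤ G.dist v a + G.dist a x := hT.isConnected.dist_triangle
  rcases adj_dist_cases hT huv a with h | h
  · exact h
  · omega

lemma cross {u v x y : V} (huv : G.Adj u v)
    (hx : G.dist v x = G.dist u x + 1) (hy : G.dist u y = G.dist v y + 1) :
    ∃ w : G.Walk x y, w.IsPath ∧ w.length = G.dist u x + 1 + G.dist v y ∧
      s(u, v) ∈ w.edges ∧ G.dist x y = G.dist u x + 1 + G.dist v y := by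
  obtain ⟨p, hp, hpl⟩ := hT.isConnected.exists_path_of_dist u x
  obtain ⟨q, hq, hql⟩ := hT.isConnected.exists_path_of_dist v y
  have hpside := support_side hT huv hx p hp
  have hqside : ∀ a ∈ q.support, G.dist u a = G.dist v a + 1 :=
    support_side hT huv.symm hy q hq
  have huq : u ∉ q.support := by
    intro h
    have := hqside u h
    simp only [SimpleGraph.dist_self] at this
    omega
  have hcons : (Walk.cons huv q).IsPath := hq.cons huq
  have hW : (p.reverse.append (Walk.cons huv q)).IsPath := by
    refine append_isPath (hp.reverse) hcons ?_
    intro z hz1 hz2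
    rw [Walk.support_reverse, List.mem_reverse] at hz1
    have hz1' := hpside z hz1
    simp only [Walk.support_cons, List.mem_cons] at hz2
    rcases hz2 with rfl | hz2
    · rfl
    · have := hqside z hz2
      omega
  refine ⟨_, hW, ?_, ?_, ?_⟩
  · rw [Walk.length_append, Walk.length_reverse, Walk.length_cons]
    omega
  · rw [Walk.edges_append]
    simp
  · rw [← path_eq_dist hT _ hW, Walk.length_append, Walk.length_reverse, Walk.length_cons]
    omega

lemma dist_getVert {s t : V} {p : G.Walk s t} (hp : p.IsPath) {n : ℕ} (hn : n ≤ p.length) :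
    G.dist s (p.getVert n) = n := by
  induction p generalizing n with
  | nil => simp only [Walk.length_nil, Nat.le_zero] at hn; subst hn; simp
  | cons h q ih =>
    rename_i a b c
    cases n with
    | zero => simp
    | succ m =>
      rw [Walk.getVert_cons_succ]
      have hq : q.IsPath := hp.of_cons
      have hm : m ≤ q.length := by simpa [Walk.length_cons] using hn
      have ihm := ih hq hm
      have hmem : q.getVert m ∈ q.support := getVert_mem_support q m
      have hmem' : q.getVert m ∈ (Walk.cons h q).support := by
        simp only [Walk.support_cons, List.mem_cons]; exact Or.inr hmem
      have h1 := dist_split hT _ hp hmem'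
      have h2 := dist_split hT _ hq hmem
      have h3 := path_eq_dist hT _ hp
      have h4 := path_eq_dist hT _ hq
      rw [Walk.length_cons] at h3
      omega

lemma penult_unique {u x z₁ z₂ : V} (h₁ : G.Adj z₁ x) (h₂ : G.Adj z₂ x)
    (hd₁ : G.dist u z₁ + 1 = G.dist u x) (hd₂ : G.dist u z₂ + 1 = G.dist u x) :
    z₁ = z₂ := by
  obtain ⟨q₁, hq₁, hl₁⟩ := hT.isConnected.exists_path_of_dist u z₁
  obtain ⟨q₂, hq₂, hl₂⟩ := hT.isConnected.exists_path_of_dist u z₂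
  have hx₁ : x ∉ q₁.support := by
    intro h
    have hs := dist_split hT q₁ hq₁ h
    have h1 : G.dist x z₁ = 1 := dist_eq_one_iff_adj.mpr h₁.symm
    omega
  have hx₂ : x ∉ q₂.support := by
    intro h
    have hs := dist_split hT q₂ hq₂ h
    have h1 : G.dist x z₂ = 1 := dist_eq_one_iff_adj.mpr h₂.symm
    omega
  have hP₁ : (q₁.concat h₁).IsPath := concat_isPath h₁ hq₁ hx₁
  have hP₂ : (q₂.concat h₂).IsPath := concat_isPath h₂ hq₂ hx₂
  have heq := (hT.existsUnique_path u x).unique hP₁ hP₂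
  have hedges := congrArg Walk.edges heq
  rw [Walk.edges_concat, Walk.edges_concat] at hedges
  have hlast := congrArg List.getLast? hedges
  rw [List.concat_eq_append, List.concat_eq_append, List.getLast?_concat, List.getLast?_concat] at hlast
  have : s(z₁, x) = s(z₂, x) := Option.some_injective _ hlast
  rw [Sym2.eq_iff] at this
  rcases this with ⟨h, -⟩ | ⟨h, h'⟩
  · exact h
  · exact absurd h h₁.ne

variable [Fintype V] [DecidableRel G.Adj]

lemma argmax_pendant {u v x : V} (huv : G.Adj u v)
    (hx : G.dist v x = G.dist u x + 1)
    (hmax : ∀ w, G.dist v w = G.dist u w + 1 → G.dist u w ≤ G.dist u x) :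
    G.degree x = 1 := by
  have hdeg : ∀ y : V, G.degree y = (G.neighborFinset y).card := fun _ => rfl
  rcases Nat.eq_zero_or_pos (G.dist u x) with h0 | hpos
  · have hxu : x = u := (hT.isConnected.dist_eq_zero_iff.mp (by rw [SimpleGraph.dist_comm]; exact h0))
    subst hxu
    have hset : G.neighborFinset x = {v} := by
      ext z
      rw [mem_neighborFinset, Finset.mem_singleton]
      constructor
      · intro hz
        have h1 : G.dist x z = 1 := dist_eq_one_iff_adj.mpr hz
        rcases adj_dist_cases hT huv z with h | h
        · have := hmax z h
          omega
        · have h2 : G.dist v z = 0 := by omega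
          exact (hT.isConnected.dist_eq_zero_iff.mp h2).symm
      · rintro rfl; exact huv
    rw [hdeg, hset, Finset.card_singleton]
  · have hxu : x ≠ u := by
      intro h; subst h; rw [SimpleGraph.dist_self] at hpos; omega
    obtain ⟨p, hp, hpl⟩ := hT.isConnected.exists_path_of_dist u x
    have hnil : ¬ p.reverse.Nil := Walk.not_nil_of_ne hxu
    set w₀ := p.reverse.getVert 1 with hw₀def
    have hadj : G.Adj x w₀ := Walk.adj_snd hnil
    have hw₀ : G.dist u w₀ + 1 = G.dist u x := by
      have hmem : w₀ ∈ p.support := by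
        have := getVert_mem_support p.reverse 1
        rwa [Walk.support_reverse, List.mem_reverse] at this
      have hs := dist_split hT p hp hmem
      have h1 : G.dist w₀ x = 1 := dist_eq_one_iff_adj.mpr hadj.symm
      omega
    have huniq : ∀ z, G.Adj x z → z = w₀ := by
      intro z hz
      have hcase : G.dist u z = G.dist u x + 1 ∨ G.dist u x = G.dist u z + 1 := by
        have := adj_dist_cases hT hz u
        rw [SimpleGraph.dist_comm (u := z) (v := u), SimpleGraph.dist_comm (u := x) (v := u)] at this
        tauto
      rcases hcase with h | h
      · rcases adj_dist_cases hT huv z with h' | h'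
        · have := hmax z h'
          omega
        · obtain ⟨w, -, -, -, hdxz⟩ := cross hT huv hx h'
          have h1 : G.dist x z = 1 := dist_eq_one_iff_adj.mpr hz
          omega
      · exact penult_unique hT hz.symm hadj.symm (by omega) hw₀
    have hset : G.neighborFinset x = {w₀} := by
      ext z
      rw [mem_neighborFinset, Finset.mem_singleton]
      exact ⟨huniq z, by rintro rfl; exact hadj⟩
    rw [hdeg, hset, Finset.card_singleton]

omit hT in
lemma le_eccent' (p w : V) : G.dist p w ≤ Finset.univ.sup (G.dist p) :=
  Finset.le_sup (Finset.mem_univ w)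

lemma edge_on_geodesic {u v : V} (huv : G.Adj u v) {k : ℕ} (hk : 1 ≤ k)
    (hpend : ∀ w, G.degree w = 1 → k ≤ Finset.univ.sup (G.dist w)) :
    ∃ x y, ∃ w : G.Walk x y, w.length = k ∧ G.dist x y = k ∧ s(u, v) ∈ w.edges := by
  classical
  obtain ⟨X, hXmem, hXmax⟩ := Finset.exists_max_image
    (Finset.univ.filter fun w => G.dist v w = G.dist u w + 1) (G.dist u)
    ⟨u, by simp [dist_eq_one_iff_adj.mpr huv.symm]⟩
  rw [Finset.mem_filter] at hXmem
  have hX : G.dist v X = G.dist u X + 1 := hXmem.2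
  have hXmax' : ∀ w, G.dist v w = G.dist u w + 1 → G.dist u w ≤ G.dist u X := by
    intro w hw; exact hXmax w (Finset.mem_filter.mpr ⟨Finset.mem_univ w, hw⟩)
  obtain ⟨Y, hYmem, hYmax⟩ := Finset.exists_max_image
    (Finset.univ.filter fun w => G.dist u w = G.dist v w + 1) (G.dist v)
    ⟨v, by simp [dist_eq_one_iff_adj.mpr huv]⟩
  rw [Finset.mem_filter] at hYmem
  have hY : G.dist u Y = G.dist v Y + 1 := hYmem.2
  have hYmax' : ∀ w, G.dist u w = G.dist v w + 1 → G.dist v w ≤ G.dist v Y := by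
    intro w hw; exact hYmax w (Finset.mem_filter.mpr ⟨Finset.mem_univ w, hw⟩)
  set du := G.dist u X with hdu
  set dv := G.dist v Y with hdv
  have hXpend : G.degree X = 1 := argmax_pendant hT huv hX hXmax'
  have hYpend : G.degree Y = 1 := argmax_pendant hT huv.symm hY hYmax'
  have hkle : k ≤ du + 1 + dv := by
    have hXtri : ∀ w : V, G.dist X w ≤ du + G.dist u w := by
      intro w
      have := hT.isConnected.dist_triangle (u := X) (v := u) (w := w)
      rw [SimpleGraph.dist_comm (u := X) (v := u)] at this
      omega
    have hYtri : ∀ w : V, G.dist Y w ≤ dv + G.dist v w := by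
      intro w
      have := hT.isConnected.dist_triangle (u := Y) (v := v) (w := w)
      rw [SimpleGraph.dist_comm (u := Y) (v := v)] at this
      omega
    rcases le_total du dv with hle | hle
    · have hecc : Finset.univ.sup (G.dist X) ≤ du + 1 + dv := by
        refine Finset.sup_le fun w _ => ?_
        have h1 := hXtri w
        rcases adj_dist_cases hT huv w with hw | hw
        · have := hXmax' w hw; omega
        · have := hYmax' w hw; omega
      have := hpend X hXpend
      omega
    · have hecc : Finset.univ.sup (G.dist Y) ≤ dv + 1 + du := by
        refine Finset.sup_le fun w _ => ?_
        have h1 := hYtri w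
        rcases adj_dist_cases hT huv w with hw | hw
        · have := hXmax' w hw; omega
        · have := hYmax' w hw; omega
      have := hpend Y hYpend
      omega
  set a := min du (k - 1) with ha
  set b := k - 1 - a with hb
  have hab : a + 1 + b = k := by omega
  have haa : a ≤ du := by omega
  have hbb : b ≤ dv := by omega
  obtain ⟨p, hp, hpl⟩ := hT.isConnected.exists_path_of_dist u X
  obtain ⟨q, hq, hql⟩ := hT.isConnected.exists_path_of_dist v Y
  set x' := p.getVert a with hx'
  set y' := q.getVert b with hy'
  have hx'd : G.dist u x' = a := dist_getVert hT hp (by omega)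
  have hy'd : G.dist v y' = b := dist_getVert hT hq (by omega)
  have hx's : G.dist v x' = G.dist u x' + 1 :=
    support_side hT huv hX p hp x' (getVert_mem_support p a)
  have hy's : G.dist u y' = G.dist v y' + 1 :=
    support_side hT huv.symm hY q hq y' (getVert_mem_support q b)
  obtain ⟨w, hwp, hwl, hwe, hwd⟩ := cross hT huv hx's hy's
  exact ⟨x', y', w, by omega, by omega, hwe⟩

lemma pendant_endpoint {p : V} (hdeg : G.degree p = 1) {x y : V} {w : G.Walk x y}
    (hw : w.IsPath) (hp : p ∈ w.support) : p = x ∨ p = y := by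
  by_contra hcon
  push_neg at hcon
  obtain ⟨hpx, hpy⟩ := hcon
  set w₁ := w.takeUntil p hp with hw₁
  set w₂ := w.dropUntil p hp with hw₂
  have hw₁p : w₁.IsPath := hw.takeUntil hp
  have hw₂p : w₂.IsPath := hw.dropUntil hp
  -- get a neighbor from the end of w₁
  obtain ⟨z₁, hz₁, he₁⟩ : ∃ z, G.Adj p z ∧ s(p, z) ∈ w₁.edges := by
    cases hr : w₁.reverse with
    | nil => exact absurd rfl hpx
    | cons h q =>
      rename_i z
      refine ⟨z, h, ?_⟩
      have hz : s(p, z) ∈ w₁.reverse.edges := by rw [hr]; simp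
      rwa [Walk.edges_reverse, List.mem_reverse] at hz
  obtain ⟨z₂, hz₂, he₂⟩ : ∃ z, G.Adj p z ∧ s(p, z) ∈ w₂.edges := by
    cases hr : w₂ with
    | nil => exact absurd rfl hpy
    | cons h q => exact ⟨_, h, by simp [hr]⟩
  have hz12 : z₁ = z₂ := by
    have h1 : z₁ ∈ G.neighborFinset p := (mem_neighborFinset _ _ _).mpr hz₁
    have h2 : z₂ ∈ G.neighborFinset p := (mem_neighborFinset _ _ _).mpr hz₂
    have hcard : (G.neighborFinset p).card = 1 := hdeg
    obtain ⟨c, hc⟩ := Finset.card_eq_one.mp hcard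
    rw [hc, Finset.mem_singleton] at h1 h2
    rw [h1, h2]
  subst hz12
  have hnodup : w.edges.Nodup := hw.isTrail.edges_nodup
  have hsplit : w.edges = w₁.edges ++ w₂.edges := by
    conv_lhs => rw [← w.take_spec hp]
    rw [Walk.edges_append]
  rw [hsplit] at hnodup
  exact (List.disjoint_of_nodup_append hnodup) he₁ he₂

lemma exists_leaf (hE : G.edgeSet.Nonempty) : ∃ v : V, G.degree v = 1 := by
  classical
  obtain ⟨e, he⟩ := hE
  induction e with
  | h a b =>
    rw [mem_edgeSet] at he
    by_contra hcon
    push_neg at hcon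
    have hmin : ∀ v : V, 2 ≤ G.degree v := by
      intro v
      have hpos : 0 < G.degree v := by
        rw [degree_pos_iff_exists_adj]
        rcases eq_or_ne v a with rfl | hva
        · exact ⟨b, he⟩
        · obtain ⟨p, hp, -⟩ := hT.isConnected.exists_path_of_dist v a
          have : ¬ p.Nil := Walk.not_nil_of_ne hva
          exact ⟨p.getVert 1, Walk.adj_snd this⟩
      have := hcon v
      omega
    have hsum : ∑ v : V, G.degree v = 2 * G.edgeFinset.card :=
      sum_degrees_eq_twice_card_edges G
    have hcard : G.edgeFinset.card + 1 = Fintype.card V := hT.card_edgeFinset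
    have hge : Fintype.card V * 2 ≤ ∑ v : V, G.degree v := by
      calc Fintype.card V * 2 = ∑ _v : V, 2 := by rw [Finset.sum_const, Finset.card_univ, smul_eq_mul]
      _ ≤ ∑ v : V, G.degree v := Finset.sum_le_sum fun v _ => hmin v
    have hpos : 0 < Fintype.card V := Fintype.card_pos_iff.mpr ⟨a⟩
    omega

end TreeGeo


theorem tree_maxEdgeGeodetic {V : Type*} [Fintype V] [DecidableEq V]
    (G : SimpleGraph V) [DecidableRel G.Adj]
    (hT : G.IsTree) (hE : G.edgeSet.Nonempty) :
    IsMaxEdgeGeodetic G (sInf {d : ℕ | ∃ v : V, G.degree v = 1 ∧ _root_.eccent G v = d}) := by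
  classical
  set S := {d : ℕ | ∃ v : V, G.degree v = 1 ∧ _root_.eccent G v = d} with hS
  have hSne : S.Nonempty := by
    obtain ⟨v, hv⟩ := TreeGeo.exists_leaf hT hE
    exact ⟨_root_.eccent G v, v, hv, rfl⟩
  set k := sInf S with hk
  obtain ⟨p₀, hp₀deg, hp₀ecc⟩ := Nat.sInf_mem hSne
  have hpend : ∀ w, G.degree w = 1 → k ≤ _root_.eccent G w := fun w hw => Nat.sInf_le ⟨w, hw, rfl⟩
  obtain ⟨u₀, hu₀⟩ : ∃ u₀, G.Adj p₀ u₀ := by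
    rw [← degree_pos_iff_exists_adj]
    omega
  have hk1 : 1 ≤ k := by
    have h1 : G.dist p₀ u₀ = 1 := dist_eq_one_iff_adj.mpr hu₀
    have h2 : G.dist p₀ u₀ ≤ Finset.univ.sup (G.dist p₀) := TreeGeo.le_eccent' p₀ u₀
    have h3 : _root_.eccent G p₀ = k := hp₀ecc
    simp only [_root_.eccent] at h3
    omega
  constructor
  · intro e he
    revert he
    refine Sym2.ind (fun u v => ?_) e
    intro he
    rw [mem_edgeSet] at he
    obtain ⟨x, y, w, hwl, hwd, hwe⟩ := TreeGeo.edge_on_geodesic hT he hk1 (fun w hw => by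
      have hh := hpend w hw
      simpa [_root_.eccent] using hh)
    exact ⟨x, y, w, ⟨hwl, hwd⟩, hwe⟩
  · intro hcon
    obtain ⟨x, y, w, ⟨hwl, hwd⟩, hwe⟩ := hcon s(p₀, u₀) ((mem_edgeSet G).mpr hu₀)
    have hwpath : w.IsPath := w.isPath_of_length_eq_dist (by omega)
    have hp₀mem : p₀ ∈ w.support := w.fst_mem_support_of_mem_edges hwe
    have hecc : _root_.eccent G p₀ = k := hp₀ecc
    simp only [_root_.eccent] at hecc
    rcases TreeGeo.pendant_endpoint hT hp₀deg hwpath hp₀mem with rfl | rfl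
    · have hle := TreeGeo.le_eccent' (G := G) p₀ y
      omega
    · have hle := TreeGeo.le_eccent' (G := G) p₀ x
      rw [SimpleGraph.dist_comm] at hwd
      omega
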